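/- Let R be a commutative ring and equip the free algebra R⟨X₁,…,Xₙ⟩ with a weight ℕ-gradation determined by positive integer degrees deg Xᵢ = nᵢ, and let ≺ be an ℕ-graded monomial ordering on the standard monomial basis B with respect to this gradation. Let I be an ideal of R⟨X₁,…,Xₙ⟩ and J = ⟨LH(I)⟩ the ideal generated by the ℕ-leading homogeneous elements of I. Then the set of leading terms {LC(f)·LM(f) : f ∈ J, f ≠ 0} equals {LC(f)·LM(f) : f ∈ I, f ≠ 0}, and LM(J) = LM(I). -/

import Mathlib

noncomputable section
open MonoidAlgebra
open scoped Classical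

/-- Words in the alphabet `X_1, ..., X_n`: the standard monomial basis `B`. -/
abbrev Word (n : ℕ) : Type := FreeMonoid (Fin n)

/-- The free `R`-algebra `R⟨X_1, ..., X_n⟩`, realized as the monoid algebra of the
free monoid on `n` letters over `R`. -/
abbrev FreeAlg (R : Type) [CommRing R] (n : ℕ) : Type := MonoidAlgebra R (Word n)

variable {R : Type} [CommRing R] {n : ℕ}

/-- The monomial (word) `w` viewed as an element of the free algebra. -/
def mono (R : Type) [CommRing R] {n : ℕ} (w : Word n) : FreeAlg R n :=
  MonoidAlgebra.of R (Word n) w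

/-- A monomial ordering: a well-ordering on words compatible with two-sided multiplication. -/
def IsMonomialOrder (n : ℕ) [LinearOrder (Word n)] : Prop :=
  WellFoundedLT (Word n) ∧ ∀ w u v s : Word n, u < v → w * u * s < w * v * s

/-- The leading monomial of `f` (with junk value `1` for `f = 0`). -/
def LMon [LinearOrder (Word n)] (f : FreeAlg R n) : Word n :=
  if h : f = 0 then 1 else f.coeff.support.max'
    (Finsupp.support_nonempty_iff.mpr (fun hc => h (MonoidAlgebra.coeff_eq_zero.mp hc)))

/-- The leading coefficient of `f`. -/
def LCoef [LinearOrder (Word n)] (f : FreeAlg R n) : R := f.coeff (LMon f)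

/-- `f` is monic: it is nonzero and its leading coefficient is `1`. -/
def IsMonic [LinearOrder (Word n)] (f : FreeAlg R n) : Prop := f ≠ 0 ∧ LCoef f = 1

/-- `v` divides `u` as words: `u = w * v * s` for some words `w, s`. -/
def MDvd {n : ℕ} (v u : Word n) : Prop := ∃ w s : Word n, u = w * v * s

/-- `G` is a monic Gröbner basis of the two-sided ideal `I`: every element of `G` is monic,
and the leading monomial of every nonzero element of `I` is divisible by the leading
monomial of some element of `G`. -/
def IsMonicGB [LinearOrder (Word n)] (G : Set (FreeAlg R n))
    (I : TwoSidedIdeal (FreeAlg R n)) : Prop :=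
  (∀ g ∈ G, IsMonic g) ∧ ∀ f ∈ I, f ≠ 0 → ∃ g ∈ G, MDvd (LMon g) (LMon f)

/-- The weight degree of a word, for the weights `deg Xᵢ = d i`. -/
def wdeg {n : ℕ} (d : Fin n → ℕ) (w : Word n) : ℕ := ((FreeMonoid.toList w).map d).sum

/-- The maximal weight degree occurring in `f`. -/
def maxdeg (d : Fin n → ℕ) (f : FreeAlg R n) : ℕ := f.coeff.support.sup (wdeg d)

/-- The ℕ-leading homogeneous element `LH(f)` of `f`: the sum of the terms of `f` of
maximal weight degree. -/
def LH (d : Fin n → ℕ) (f : FreeAlg R n) : FreeAlg R n :=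
  ∑ w ∈ f.coeff.support.filter (fun w => wdeg d w = maxdeg d f), MonoidAlgebra.single w (f.coeff w)

/-- The set `LH(S)` of leading homogeneous elements of the nonzero elements of `S`. -/
def LHset (d : Fin n → ℕ) (S : Set (FreeAlg R n)) : Set (FreeAlg R n) :=
  {x | ∃ f ∈ S, f ≠ 0 ∧ x = LH d f}

/-- An ℕ-graded monomial ordering with respect to the weights `d`: a monomial ordering
such that words of smaller degree are smaller. -/
def IsGradedMonomialOrder {n : ℕ} (d : Fin n → ℕ) [LinearOrder (Word n)] : Prop :=
  IsMonomialOrder n ∧ ∀ u v : Word n, wdeg d u < wdeg d v → u < v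

/-- The leading term `LC(f)·LM(f)` of `f`, as an element of the free algebra. -/
def LTerm [LinearOrder (Word n)] (f : FreeAlg R n) : FreeAlg R n :=
  MonoidAlgebra.single (LMon f) (LCoef f)

/-- The set of leading terms `LC(f)·LM(f)` of the nonzero elements of `S`. -/
def LTset [LinearOrder (Word n)] (S : Set (FreeAlg R n)) : Set (FreeAlg R n) :=
  {x | ∃ f ∈ S, f ≠ 0 ∧ x = LTerm f}

/-- The set `LM(S)` of leading monomials of the nonzero elements of `S`. -/
def LMset [LinearOrder (Word n)] (S : Set (FreeAlg R n)) : Set (Word n) :=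
  {w | ∃ f ∈ S, f ≠ 0 ∧ LMon f = w}


namespace LHAux

variable (d : Fin n → ℕ)

/-- The homogeneous component of `f` in weight degree `m`. -/
def comp (m : ℕ) (f : FreeAlg R n) : FreeAlg R n :=
  MonoidAlgebra.ofCoeff (Finsupp.filter (fun w => wdeg d w = m) f.coeff)

variable {d}

lemma wdeg_mul (u v : Word n) : wdeg d (u * v) = wdeg d u + wdeg d v := by
  simp [wdeg, FreeMonoid.toList_mul]

lemma comp_apply (m : ℕ) (f : FreeAlg R n) (w : Word n) :
    (comp d m f).coeff w = if wdeg d w = m then f.coeff w else 0 := Finsupp.filter_apply _ _ _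

lemma supp_comp_subset (m : ℕ) (f : FreeAlg R n) : (comp d m f).coeff.support ⊆ f.coeff.support := by
  rw [comp, MonoidAlgebra.coeff_ofCoeff, Finsupp.support_filter]; exact Finset.filter_subset _ _

lemma wdeg_of_mem_supp_comp {m : ℕ} {f : FreeAlg R n} {w : Word n}
    (hw : w ∈ (comp d m f).coeff.support) : wdeg d w = m := by
  rw [comp, MonoidAlgebra.coeff_ofCoeff, Finsupp.support_filter, Finset.mem_filter] at hw; exact hw.2

lemma comp_eq_self {m : ℕ} {f : FreeAlg R n} (h : ∀ w ∈ f.coeff.support, wdeg d w = m) :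
    comp d m f = f :=
  MonoidAlgebra.coeff_injective
    ((Finsupp.filter_eq_self_iff _ _).2 fun w hw => h w (Finsupp.mem_support_iff.2 hw))

lemma comp_eq_zero {m : ℕ} {f : FreeAlg R n} (h : ∀ w ∈ f.coeff.support, wdeg d w ≠ m) :
    comp d m f = 0 :=
  MonoidAlgebra.coeff_injective <| (Finsupp.filter_eq_zero_iff _ _).2 fun w hp => by
    by_contra h0
    exact h w (Finsupp.mem_support_iff.2 h0) hp

lemma comp_homog {e m : ℕ} {f : FreeAlg R n} (h : ∀ w ∈ f.coeff.support, wdeg d w = e) :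
    comp d m f = if e = m then f else 0 := by
  split_ifs with he
  · exact comp_eq_self (he ▸ h)
  · exact comp_eq_zero fun w hw => (h w hw) ▸ he

lemma comp_sum {ι : Type*} (s : Finset ι) (g : ι → FreeAlg R n) (m : ℕ) :
    comp d m (∑ i ∈ s, g i) = ∑ i ∈ s, comp d m (g i) := by
  ext w; simp only [comp_apply, MonoidAlgebra.coeff_sum, Finsupp.finset_sum_apply]
  split_ifs <;> simp

lemma comp_zero (m : ℕ) : comp d m (0 : FreeAlg R n) = 0 := by
  ext w; simp [comp_apply]

lemma comp_add (m : ℕ) (f g : FreeAlg R n) :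
    comp d m (f + g) = comp d m f + comp d m g := by
  ext w; simp only [comp_apply, MonoidAlgebra.coeff_add, Finsupp.add_apply]
  split_ifs <;> simp

lemma comp_neg (m : ℕ) (f : FreeAlg R n) : comp d m (-f) = -comp d m f := by
  ext w; simp only [comp_apply, MonoidAlgebra.coeff_neg, Finsupp.neg_apply]
  split_ifs <;> simp

lemma homog_mul {a b : FreeAlg R n} {k l : ℕ} (ha : ∀ w ∈ a.coeff.support, wdeg d w = k)
    (hb : ∀ w ∈ b.coeff.support, wdeg d w = l) :
    ∀ w ∈ (a * b).coeff.support, wdeg d w = k + l := by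
  intro w hw
  obtain ⟨u, hu, v, hv, rfl⟩ := Finset.mem_mul.1 (MonoidAlgebra.support_coeff_mul_subset a b hw)
  rw [wdeg_mul, ha u hu, hb v hv]

lemma supp_mul3_le {a b : FreeAlg R n} {k l : ℕ} (ha : ∀ w ∈ a.coeff.support, wdeg d w = k)
    (hb : ∀ w ∈ b.coeff.support, wdeg d w = l) (f : FreeAlg R n) :
    ∀ w ∈ (a * f * b).coeff.support, wdeg d w ≤ k + maxdeg d f + l := by
  intro w hw
  obtain ⟨uv, huv, v, hv, rfl⟩ :=
    Finset.mem_mul.1 (MonoidAlgebra.support_coeff_mul_subset _ b hw)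
  obtain ⟨u, hu, t, ht, rfl⟩ := Finset.mem_mul.1 (MonoidAlgebra.support_coeff_mul_subset a f huv)
  rw [wdeg_mul, wdeg_mul, ha u hu, hb v hv]
  exact Nat.add_le_add_right (Nat.add_le_add_left (Finset.le_sup ht) _) _

lemma sum_comp {f : FreeAlg R n} {N : ℕ} (hN : ∀ w ∈ f.coeff.support, wdeg d w < N) :
    ∑ k ∈ Finset.range N, comp d k f = f := by
  ext w
  rw [MonoidAlgebra.coeff_sum, Finset.sum_apply']
  simp only [comp_apply]
  rw [Finset.sum_ite_eq (Finset.range N) (wdeg d w) (fun _ => f.coeff w)]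
  by_cases hw : f.coeff w = 0
  · simp [hw]
  · rw [if_pos (Finset.mem_range.2 (hN w (Finsupp.mem_support_iff.2 hw)))]

lemma comp_mul3 {a b : FreeAlg R n} {k l : ℕ} (ha : ∀ w ∈ a.coeff.support, wdeg d w = k)
    (hb : ∀ w ∈ b.coeff.support, wdeg d w = l) (f : FreeAlg R n) (j : ℕ) :
    comp d (k + j + l) (a * f * b) = a * comp d j f * b := by
  have hf : ∑ i ∈ Finset.range (maxdeg d f + 1), comp d i f = f :=
    sum_comp fun w hw => Nat.lt_succ_of_le (Finset.le_sup hw)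
  conv_lhs => rw [← hf]
  simp only [Finset.mul_sum, Finset.sum_mul]
  rw [comp_sum]
  have hterm : ∀ i, comp d (k + j + l) (a * comp d i f * b)
      = if i = j then a * comp d i f * b else 0 := by
    intro i
    have := comp_homog (d := d) (m := k + j + l)
      (homog_mul (homog_mul ha (fun w hw => wdeg_of_mem_supp_comp (m := i) (f := f) hw)) hb)
    rw [this]
    by_cases hij : i = j
    · simp [hij]
    · rw [if_neg, if_neg hij]; omega
  simp only [hterm]
  rw [Finset.sum_ite_eq' (Finset.range (maxdeg d f + 1)) j]
  by_cases hj : j ∈ Finset.range (maxdeg d f + 1)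
  · rw [if_pos hj]
  · rw [if_neg hj]
    have : comp d j f = 0 := comp_eq_zero fun w hw => by
      have h1 : wdeg d w ≤ maxdeg d f := Finset.le_sup hw
      have h2 : maxdeg d f + 1 ≤ j := by simpa [Finset.mem_range] using hj
      omega
    rw [this, mul_zero, zero_mul]

lemma LH_eq_comp (d : Fin n → ℕ) (f : FreeAlg R n) : LH d f = comp d (maxdeg d f) f := by
  ext w
  rw [LH, MonoidAlgebra.coeff_sum, Finset.sum_apply', comp_apply]
  simp only [MonoidAlgebra.coeff_single, Finsupp.single_apply]
  rw [Finset.sum_ite_eq' (f.coeff.support.filter fun w => wdeg d w = maxdeg d f) w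
    (fun w' => f.coeff w')]
  by_cases hw : f.coeff w = 0
  · simp [hw]
  · simp [Finset.mem_filter, Finsupp.mem_support_iff, hw]

lemma supp_LH (d : Fin n → ℕ) (f : FreeAlg R n) :
    ∀ w ∈ (LH d f).coeff.support, wdeg d w = maxdeg d f := by
  rw [LH_eq_comp]; exact fun w hw => wdeg_of_mem_supp_comp hw

lemma supp_LH_subset (d : Fin n → ℕ) (f : FreeAlg R n) : (LH d f).coeff.support ⊆ f.coeff.support := by
  rw [LH_eq_comp]; exact supp_comp_subset _ _

lemma LH_apply_maxdeg {f : FreeAlg R n} {w : Word n} (hw : wdeg d w = maxdeg d f) :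
    (LH d f).coeff w = f.coeff w := by
  rw [LH_eq_comp, comp_apply, if_pos hw]

lemma LH_ne_zero {f : FreeAlg R n} (hf : f ≠ 0) : LH d f ≠ 0 := by
  obtain ⟨w, hw, hs⟩ :=
    Finset.exists_mem_eq_sup f.coeff.support
      (Finsupp.support_nonempty_iff.2 (fun hc => hf (MonoidAlgebra.coeff_eq_zero.mp hc))) (wdeg d)
  intro h
  have h2 : (LH d f).coeff w = f.coeff w := LH_apply_maxdeg hs.symm
  rw [h] at h2
  exact Finsupp.mem_support_iff.1 hw h2.symm

variable [LinearOrder (Word n)]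

lemma LMon_mem {f : FreeAlg R n} (hf : f ≠ 0) : LMon f ∈ f.coeff.support := by
  rw [LMon, dif_neg hf]; exact Finset.max'_mem _ _

lemma wdeg_LMon (hlt : ∀ u v : Word n, wdeg d u < wdeg d v → u < v) {f : FreeAlg R n}
    (hf : f ≠ 0) : wdeg d (LMon f) = maxdeg d f := by
  obtain ⟨w, hw, hs⟩ :=
    Finset.exists_mem_eq_sup f.coeff.support
      (Finsupp.support_nonempty_iff.2 (fun hc => hf (MonoidAlgebra.coeff_eq_zero.mp hc))) (wdeg d)
  refine le_antisymm (Finset.le_sup (LMon_mem hf)) ?_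
  have hle : w ≤ LMon f := by rw [LMon, dif_neg hf]; exact Finset.le_max' _ w hw
  have hs' : maxdeg d f = wdeg d w := hs
  rw [hs']
  by_contra hlt2
  push_neg at hlt2
  exact absurd hle (not_le.2 (hlt _ _ hlt2))

lemma LMon_LH (hlt : ∀ u v : Word n, wdeg d u < wdeg d v → u < v) {f : FreeAlg R n}
    (hf : f ≠ 0) : LMon (LH d f) = LMon f := by
  have hne : LH d f ≠ 0 := LH_ne_zero hf
  have hmem : LMon f ∈ (LH d f).coeff.support := by
    rw [Finsupp.mem_support_iff, LH_apply_maxdeg (wdeg_LMon hlt hf)]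
    exact Finsupp.mem_support_iff.1 (LMon_mem hf)
  have e1 : LMon f = f.coeff.support.max' (Finsupp.support_nonempty_iff.mpr
      (fun hc => hf (MonoidAlgebra.coeff_eq_zero.mp hc))) := dif_neg hf
  have e2 : LMon (LH d f) = (LH d f).coeff.support.max'
      (Finsupp.support_nonempty_iff.mpr
        (fun hc => hne (MonoidAlgebra.coeff_eq_zero.mp hc))) := dif_neg hne
  apply le_antisymm
  · rw [e2, e1]
    exact Finset.le_max' _ _ (supp_LH_subset d f (Finset.max'_mem _ _))
  · rw [e2]
    exact Finset.le_max' _ _ hmem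

lemma LCoef_LH (hlt : ∀ u v : Word n, wdeg d u < wdeg d v → u < v) {f : FreeAlg R n}
    (hf : f ≠ 0) : LCoef (LH d f) = LCoef f := by
  show (LH d f).coeff (LMon (LH d f)) = f.coeff (LMon f)
  rw [LMon_LH hlt hf]
  exact LH_apply_maxdeg (wdeg_LMon hlt hf)

lemma LTerm_LH (hlt : ∀ u v : Word n, wdeg d u < wdeg d v → u < v) {f : FreeAlg R n}
    (hf : f ≠ 0) : LTerm (LH d f) = LTerm f := by
  show MonoidAlgebra.single (LMon (LH d f)) (LCoef (LH d f)) =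
    MonoidAlgebra.single (LMon f) (LCoef f)
  rw [LMon_LH hlt hf, LCoef_LH hlt hf]

lemma key (I : TwoSidedIdeal (FreeAlg R n)) (h : FreeAlg R n)
    (hh : h ∈ TwoSidedIdeal.span (LHset d (I : Set (FreeAlg R n)))) (m : ℕ) :
    ∃ g, g ∈ I ∧ comp d m g = comp d m h ∧ ∀ w ∈ g.coeff.support, wdeg d w ≤ m := by
  rw [TwoSidedIdeal.mem_span_iff_mem_addSubgroup_closure] at hh
  induction hh using AddSubgroup.closure_induction with
  | mem x hx =>
    obtain ⟨p, hp, b, -, rfl⟩ := hx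
    obtain ⟨a, -, y, hy, rfl⟩ := hp
    obtain ⟨f, hfI, hf0, rfl⟩ := hy
    have hcompa : ∀ k : ℕ, ∀ w ∈ (comp d k a).coeff.support, wdeg d w = k :=
      fun k w hw => wdeg_of_mem_supp_comp hw
    have hcompb : ∀ l : ℕ, ∀ w ∈ (comp d l b).coeff.support, wdeg d w = l :=
      fun l w hw => wdeg_of_mem_supp_comp hw
    set N := maxdeg d a + maxdeg d b + m + 1 with hN
    set T := (Finset.range N ×ˢ Finset.range N).filter
      (fun p : ℕ × ℕ => p.1 + maxdeg d f + p.2 = m) with hT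
    refine ⟨∑ p ∈ T, comp d p.1 a * f * comp d p.2 b, ?_, ?_, ?_⟩
    · exact sum_mem fun p _ => I.mul_mem_right _ _ (I.mul_mem_left _ _ hfI)
    · have hga : ∑ k ∈ Finset.range N, comp d k a = a :=
        sum_comp (fun w hw => by
          have h1 : wdeg d w ≤ maxdeg d a := Finset.le_sup hw; omega)
      have hgb : ∑ l ∈ Finset.range N, comp d l b = b :=
        sum_comp (fun w hw => by
          have h1 : wdeg d w ≤ maxdeg d b := Finset.le_sup hw; omega)
      have hx2 : a * LH d f * b =
          ∑ k ∈ Finset.range N, ∑ l ∈ Finset.range N,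
            comp d k a * LH d f * comp d l b := by
        conv_lhs => rw [← hga, ← hgb]
        simp only [Finset.sum_mul, Finset.mul_sum]
        exact Finset.sum_comm
      beta_reduce
      rw [comp_sum, hx2, comp_sum]
      simp only [comp_sum]
      have hterm : ∀ k l : ℕ, comp d m (comp d k a * LH d f * comp d l b) =
          if k + maxdeg d f + l = m then comp d k a * LH d f * comp d l b else 0 :=
        fun k l => comp_homog (homog_mul (homog_mul (hcompa k) (supp_LH d f)) (hcompb l))
      simp only [hterm]
      have hL : ∀ p ∈ T, comp d m (comp d p.1 a * f * comp d p.2 b)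
          = comp d p.1 a * LH d f * comp d p.2 b := by
        intro p hp
        have hm : p.1 + maxdeg d f + p.2 = m := (Finset.mem_filter.1 hp).2
        rw [← hm, comp_mul3 (hcompa p.1) (hcompb p.2) f (maxdeg d f), ← LH_eq_comp]
      rw [Finset.sum_congr rfl hL, ← Finset.sum_product', ← Finset.sum_filter]
    · intro w hw
      rw [MonoidAlgebra.coeff_sum] at hw
      obtain ⟨p, hp, hw2⟩ := Finsupp.mem_support_finset_sum w hw
      have h1 := supp_mul3_le (hcompa p.1) (hcompb p.2) f w hw2
      have hm : p.1 + maxdeg d f + p.2 = m := (Finset.mem_filter.1 hp).2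
      omega
  | zero => exact ⟨0, I.zero_mem, by rw [comp_zero], by simp⟩
  | add x y hx hy ihx ihy =>
    obtain ⟨g1, hg1, hc1, hb1⟩ := ihx
    obtain ⟨g2, hg2, hc2, hb2⟩ := ihy
    refine ⟨g1 + g2, I.add_mem hg1 hg2, by rw [comp_add, comp_add, hc1, hc2], ?_⟩
    intro w hw
    rcases Finset.mem_union.1 (Finsupp.support_add hw) with h1 | h2
    · exact hb1 w h1
    · exact hb2 w h2
  | neg x hx ih =>
    obtain ⟨g, hg, hc, hb⟩ := ih
    exact ⟨-g, I.neg_mem hg, by rw [comp_neg, comp_neg, hc],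
      fun w hw => hb w (by rwa [MonoidAlgebra.coeff_neg, Finsupp.support_neg] at hw)⟩

lemma main (hlt : ∀ u v : Word n, wdeg d u < wdeg d v → u < v)
    (I : TwoSidedIdeal (FreeAlg R n)) {h : FreeAlg R n}
    (hhJ : h ∈ TwoSidedIdeal.span (LHset d (I : Set (FreeAlg R n)))) (hh0 : h ≠ 0) :
    ∃ g ∈ I, g ≠ 0 ∧ LMon g = LMon h ∧ LTerm g = LTerm h := by
  have hLH0 : LH d h ≠ 0 := LH_ne_zero hh0
  obtain ⟨g, hgI, hc, hb⟩ := key I h hhJ (maxdeg d h)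
  have hcomph : comp d (maxdeg d h) h = LH d h := (LH_eq_comp d h).symm
  have hcg : comp d (maxdeg d h) g ≠ 0 := by rw [hc, hcomph]; exact hLH0
  have hg0 : g ≠ 0 := by rintro rfl; rw [comp_zero] at hcg; exact hcg rfl
  obtain ⟨w, hw⟩ :=
    Finsupp.support_nonempty_iff.2 (fun hc => hcg (MonoidAlgebra.coeff_eq_zero.mp hc))
  have hmax : maxdeg d g = maxdeg d h := by
    refine le_antisymm (Finset.sup_le hb) ?_
    have h1 : wdeg d w = maxdeg d h := wdeg_of_mem_supp_comp hw
    have h2 : w ∈ g.coeff.support := supp_comp_subset _ _ hw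
    calc maxdeg d h = wdeg d w := h1.symm
      _ ≤ maxdeg d g := Finset.le_sup h2
  have hLHg : LH d g = LH d h := by rw [LH_eq_comp, hmax, hc, hcomph]
  refine ⟨g, hgI, hg0, ?_, ?_⟩
  · rw [← LMon_LH hlt hg0, hLHg, LMon_LH hlt hh0]
  · rw [← LTerm_LH hlt hg0, hLHg, LTerm_LH hlt hh0]

end LHAux

/-- Let `J = ⟨LH(I)⟩`, with `≺` an ℕ-graded monomial ordering. Then the
set of leading terms of `J` equals that of `I`, and `LM(J) = LM(I)`. -/
theorem lt_lm_of_lh_ideal [LinearOrder (Word n)] (d : Fin n → ℕ) (hd : ∀ i, 0 < d i)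
    (hord : IsGradedMonomialOrder d) (I : TwoSidedIdeal (FreeAlg R n)) :
    LTset ((TwoSidedIdeal.span (LHset d (I : Set (FreeAlg R n))) :
        TwoSidedIdeal (FreeAlg R n)) : Set (FreeAlg R n)) =
      LTset (I : Set (FreeAlg R n)) ∧
    LMset ((TwoSidedIdeal.span (LHset d (I : Set (FreeAlg R n))) :
        TwoSidedIdeal (FreeAlg R n)) : Set (FreeAlg R n)) =
      LMset (I : Set (FreeAlg R n)) := by
  obtain ⟨-, hlt⟩ := hord
  constructor
  · ext x
    constructor
    · rintro ⟨h, hhJ, hh0, rfl⟩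
      obtain ⟨g, hgI, hg0, -, hT⟩ := LHAux.main hlt I hhJ hh0
      exact ⟨g, hgI, hg0, hT.symm⟩
    · rintro ⟨f, hfI, hf0, rfl⟩
      exact ⟨LH d f, TwoSidedIdeal.subset_span ⟨f, hfI, hf0, rfl⟩,
        LHAux.LH_ne_zero hf0, (LHAux.LTerm_LH hlt hf0).symm⟩
  · ext w
    constructor
    · rintro ⟨h, hhJ, hh0, rfl⟩
      obtain ⟨g, hgI, hg0, hM, -⟩ := LHAux.main hlt I hhJ hh0
      exact ⟨g, hgI, hg0, hM⟩
    · rintro ⟨f, hfI, hf0, rfl⟩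
      exact ⟨LH d f, TwoSidedIdeal.subset_span ⟨f, hfI, hf0, rfl⟩,
        LHAux.LH_ne_zero hf0, LHAux.LMon_LH hlt hf0⟩
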